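/- In a monotone hierarchy with root i_0 and height h (all leaves at distance h from the root), for any nodes i, j with ρ(j) = ρ(i) + 1, the neighborhood statistic of i strictly first-order dominates that of j: for every distance t, the number of nodes within distance t of i is at least that of j, with strict inequality for t = h − ρ(i). -/

import Mathlib

/-- `j` is a successor of `i` in the tree `g` oriented away from the root `r`. -/
def Succ {n : ℕ} (g : SimpleGraph (Fin n)) (r i j : Fin n) : Prop :=
  i ≠ j ∧ g.dist r j = g.dist r i + g.dist i j

/-- Number of nodes at distance at most `t` from `i`. -/
noncomputable def ballCount {n : ℕ} (g : SimpleGraph (Fin n)) (i : Fin n) (t : ℕ) : ℕ :=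
  Nat.card {k : Fin n | g.dist i k ≤ t}

/-- A monotone hierarchy (see the paper's definition). -/
def IsMonotoneHierarchy {n : ℕ} (g : SimpleGraph (Fin n)) [DecidableRel g.Adj]
    (r : Fin n) (h : ℕ) : Prop :=
  g.IsTree ∧
  (∀ i j, g.dist r i < g.dist r j → g.degree j ≤ g.degree i) ∧
  (∀ i j, g.dist r i = g.dist r j → g.degree j < g.degree i →
    ∀ k l, Succ g r i k → Succ g r j l → g.dist r k = g.dist r l →
      g.degree l ≤ g.degree k) ∧
  (∀ i j, g.dist r i = g.dist r j → g.degree i = g.degree j →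
    (∃ k l, Succ g r i k ∧ Succ g r j l ∧ g.dist r k = g.dist r l ∧
      g.degree l < g.degree k) →
    ∀ k l, Succ g r i k → Succ g r j l → g.dist r k = g.dist r l →
      g.degree l ≤ g.degree k) ∧
  (∀ i, g.degree i = 1 → g.dist r i = h)



open Finset SimpleGraph

namespace Stmt16

variable {n : ℕ} {g : SimpleGraph (Fin n)} {r : Fin n}

/-- `x` lies on the geodesic from `r` to `k`. -/
def onP (g : SimpleGraph (Fin n)) (r x k : Fin n) : Prop :=
  g.dist r x + g.dist x k = g.dist r k

section TreeBasics

variable (hT : g.IsTree)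
include hT

lemma path_len {u v : Fin n} (p : g.Walk u v) (hp : p.IsPath) : p.length = g.dist u v := by
  obtain ⟨q, hq⟩ := hT.isConnected.exists_walk_length_eq_dist u v
  have h1 : q.bypass.length ≤ g.dist u v := hq ▸ q.length_bypass_le
  have h2 : g.dist u v ≤ q.bypass.length := SimpleGraph.dist_le _
  have hb : q.bypass = p := ((hT.existsUnique_path u v).unique q.bypass_isPath hp)
  rw [hb] at h1 h2
  omega

lemma min_walk_isPath {u v : Fin n} (p : g.Walk u v) (hl : p.length ≤ g.dist u v) :
    p.IsPath := by
  induction p with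
  | nil => exact SimpleGraph.Walk.IsPath.nil
  | @cons u x v hadj w ih =>
    rw [SimpleGraph.Walk.length_cons] at hl
    have hxv : g.dist x v ≤ w.length := SimpleGraph.dist_le w
    have hux : g.dist u v ≤ 1 + g.dist x v := by
      calc g.dist u v ≤ g.dist u x + g.dist x v := hT.isConnected.dist_triangle
        _ ≤ 1 + g.dist x v := by
            have := SimpleGraph.dist_le (SimpleGraph.Walk.cons hadj SimpleGraph.Walk.nil)
            simp at this; omega
    have hwmin : w.length ≤ g.dist x v := by omega
    have hw : w.IsPath := ih hwmin
    refine hw.cons ?_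
    intro hu
    have hts := w.take_spec hu
    have hlen : (w.takeUntil u hu).length + (w.dropUntil u hu).length = w.length := by
      conv_rhs => rw [← hts]
      rw [SimpleGraph.Walk.length_append]
    have hne : x ≠ u := fun hxe => (g.ne_of_adj hadj) hxe.symm
    have h1 : 1 ≤ (w.takeUntil u hu).length := by
      by_contra hc
      push_neg at hc
      interval_cases hle : (w.takeUntil u hu).length
      exact hne ((w.takeUntil u hu).eq_of_length_eq_zero hle)
    have := SimpleGraph.dist_le (w.dropUntil u hu)
    omega

lemma walk_eq_path {u v : Fin n} (p : g.Walk u v) (hl : p.length ≤ g.dist u v)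
    {q : g.Walk u v} (hq : q.IsPath) : p = q :=
  (hT.existsUnique_path u v).unique (min_walk_isPath hT p hl) hq

end TreeBasics

section OnP

lemma onP_self (g : SimpleGraph (Fin n)) (r k : Fin n) : onP g r k k := by
  simp [onP]

lemma onP_root (g : SimpleGraph (Fin n)) (r k : Fin n) : onP g r r k := by
  simp [onP]

variable (hc : g.Connected)
include hc

lemma onP_trans {x z k : Fin n} (h1 : onP g r x z) (h2 : onP g r z k) : onP g r x k := by
  unfold onP at *
  have t1 : g.dist x k ≤ g.dist x z + g.dist z k := hc.dist_triangle
  have t2 : g.dist r k ≤ g.dist r x + g.dist x k := hc.dist_triangle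
  omega

lemma onP_eq {x k : Fin n} (h1 : onP g r x k) (h2 : g.dist r x = g.dist r k) : x = k := by
  unfold onP at h1
  have : g.dist x k = 0 := by omega
  exact (hc.dist_eq_zero_iff).mp this

lemma dist_r_eq_zero {x : Fin n} (h : g.dist r x = 0) : x = r :=
  ((hc.dist_eq_zero_iff).mp h).symm

end OnP

section Paths

variable (hT : g.IsTree)
include hT

lemma adj_dist_le_one {u v : Fin n} (h : g.Adj u v) : g.dist u v ≤ 1 := by
  have := SimpleGraph.dist_le (SimpleGraph.Walk.cons h SimpleGraph.Walk.nil)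
  simpa using this

lemma adj_of_dist_eq_one {u v : Fin n} (h : g.dist u v = 1) : g.Adj u v := by
  obtain ⟨p, hp⟩ := hT.isConnected.exists_walk_length_eq_dist u v
  rw [h] at hp
  cases p with
  | nil => simp at hp
  | cons hadj q =>
    simp [SimpleGraph.Walk.length_cons] at hp
    have := q.eq_of_length_eq_zero (SimpleGraph.Walk.nil_iff_length_eq.mp hp)
    exact this ▸ hadj

/-- membership in the unique path from `r` to `k` is the same as `onP`. -/
lemma mem_path_onP {k x : Fin n} (p : g.Walk r k) (hp : p.IsPath) :
    x ∈ p.support ↔ onP g r x k := by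
  constructor
  · intro hx
    have hts := p.take_spec hx
    have hlen : (p.takeUntil x hx).length + (p.dropUntil x hx).length = p.length := by
      conv_rhs => rw [← hts]; rw [SimpleGraph.Walk.length_append]
    have l1 := path_len hT _ (hp.takeUntil hx)
    have l2 := path_len hT _ (hp.dropUntil hx)
    have l3 := path_len hT _ hp
    unfold onP
    omega
  · intro hx
    obtain ⟨p1, hp1⟩ := hT.isConnected.exists_walk_length_eq_dist r x
    obtain ⟨p2, hp2⟩ := hT.isConnected.exists_walk_length_eq_dist x k
    have hlen : (p1.append p2).length ≤ g.dist r k := by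
      rw [SimpleGraph.Walk.length_append]; unfold onP at hx; omega
    have := walk_eq_path hT (p1.append p2) hlen hp
    rw [← this]
    rw [SimpleGraph.Walk.mem_support_append_iff]
    left; exact p1.end_mem_support

/-- existence of ancestors at every smaller depth -/
lemma anc_exists' : ∀ (m : ℕ) (k : Fin n), m ≤ g.dist r k →
    ∃ z, g.dist r z + m = g.dist r k ∧ onP g r z k := by
  intro m
  induction m with
  | zero => intro k _; exact ⟨k, by simp, onP_self g r k⟩
  | succ m ih =>
    intro k hm
    obtain ⟨z, hz1, hz2⟩ := ih k (by omega)
    have hz0 : 1 ≤ g.dist r z := by omega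
    obtain ⟨q, hq⟩ := hT.isConnected.exists_walk_length_eq_dist z r
    have hqz : q.length = g.dist r z := by rw [hq, SimpleGraph.dist_comm]
    cases q with
    | nil => rw [SimpleGraph.Walk.length_nil] at hqz; omega
    | @cons _ y _ hadj q' =>
      rw [SimpleGraph.Walk.length_cons] at hqz
      have hyr : g.dist y r ≤ q'.length := SimpleGraph.dist_le q'
      have hry : g.dist r y ≤ g.dist r z - 1 := by
        rw [SimpleGraph.dist_comm]; omega
      have htri : g.dist r z ≤ g.dist r y + g.dist y z := hT.isConnected.dist_triangle
      have hyz : g.dist y z ≤ 1 := by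
        rw [SimpleGraph.dist_comm]; exact adj_dist_le_one hT hadj
      have hry' : g.dist r y + 1 = g.dist r z := by omega
      refine ⟨y, by omega, ?_⟩
      have honyz : onP g r y z := by unfold onP; omega
      exact onP_trans hT.isConnected honyz hz2

lemma anc_unique {k z₁ z₂ : Fin n} (h1 : onP g r z₁ k) (h2 : onP g r z₂ k)
    (hd : g.dist r z₁ = g.dist r z₂) : z₁ = z₂ := by
  obtain ⟨p, hp, -⟩ := hT.existsUnique_path r k
  have hz1 : z₁ ∈ p.support := (mem_path_onP hT p hp).mpr h1
  have hz2 : z₂ ∈ p.support := (mem_path_onP hT p hp).mpr h2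
  have hts := p.take_spec hz1
  have : z₂ ∈ (p.takeUntil z₁ hz1).support ∨ z₂ ∈ (p.dropUntil z₁ hz1).support := by
    rw [← SimpleGraph.Walk.mem_support_append_iff, hts]; exact hz2
  rcases this with hcase | hcase
  · -- z₂ on path r → z₁
    have : onP g r z₂ z₁ := (mem_path_onP hT _ (hp.takeUntil hz1)).mp hcase
    exact (onP_eq hT.isConnected this hd.symm).symm
  · -- z₂ on the path z₁ → k
    have hdp : (p.dropUntil z₁ hz1).IsPath := hp.dropUntil hz1
    have hts2 := (p.dropUntil z₁ hz1).take_spec hcase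
    have hlen : ((p.dropUntil z₁ hz1).takeUntil z₂ hcase).length +
        ((p.dropUntil z₁ hz1).dropUntil z₂ hcase).length = (p.dropUntil z₁ hz1).length := by
      conv_rhs => rw [← hts2]; rw [SimpleGraph.Walk.length_append]
    have l1 := path_len hT _ (hdp.takeUntil hcase)
    have l2 := path_len hT _ (hdp.dropUntil hcase)
    have l3 := path_len hT _ hdp
    have t2 : g.dist r k ≤ g.dist r z₂ + g.dist z₂ k := hT.isConnected.dist_triangle
    unfold onP at h1 h2
    have : g.dist z₁ z₂ = 0 := by omega
    exact hT.isConnected.dist_eq_zero_iff.mp this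

/-- two ancestors of the same vertex are comparable -/
lemma anc_chain {x y w : Fin n} (h1 : onP g r x w) (h2 : onP g r y w)
    (hd : g.dist r x ≤ g.dist r y) : onP g r x y := by
  have hyw : g.dist r y ≤ g.dist r w := by unfold onP at h2; omega
  obtain ⟨z, hz1, hz2⟩ := anc_exists' (r := r) hT (g.dist r y - g.dist r x) y (by omega)
  have hzd : g.dist r z = g.dist r x := by omega
  have hzw : onP g r z w := onP_trans hT.isConnected hz2 h2
  have : z = x := anc_unique hT hzw h1 (by omega)
  exact this ▸ hz2

lemma adj_depth {u w : Fin n} (h : g.Adj u w) :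
    g.dist r w = g.dist r u + 1 ∨ g.dist r u = g.dist r w + 1 := by
  have h1 : g.dist u w ≤ 1 := adj_dist_le_one hT h
  have t1 : g.dist r w ≤ g.dist r u + g.dist u w := hT.isConnected.dist_triangle
  have t2 : g.dist r u ≤ g.dist r w + g.dist w u := hT.isConnected.dist_triangle
  have h2 : g.dist w u ≤ 1 := adj_dist_le_one hT h.symm
  have hne : u ≠ w := g.ne_of_adj h
  rcases Nat.lt_trichotomy (g.dist r u) (g.dist r w) with hlt | heq | hgt
  · left; omega
  · exfalso
    obtain ⟨p, hp, -⟩ := hT.existsUnique_path r u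
    by_cases hw : w ∈ p.support
    · have : onP g r w u := (mem_path_onP hT p hp).mp hw
      exact hne ((onP_eq hT.isConnected this heq.symm).symm)
    · have hq : (p.concat h).IsPath := by
        rw [← SimpleGraph.Walk.isPath_reverse_iff, SimpleGraph.Walk.reverse_concat]
        refine SimpleGraph.Walk.IsPath.cons hp.reverse ?_
        rw [SimpleGraph.Walk.support_reverse, List.mem_reverse]
        exact hw
      have := path_len hT _ hq
      rw [SimpleGraph.Walk.length_concat] at this
      have := path_len hT _ hp
      omega
  · right; omega

/-- the meet: common ancestor realizing the distance -/
lemma meet : ∀ (D : ℕ) (v k : Fin n), g.dist v k ≤ D →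
    ∃ z, onP g r z v ∧ onP g r z k ∧
      g.dist r v + g.dist r k = 2 * g.dist r z + g.dist v k := by
  intro D
  induction D with
  | zero =>
    intro v k hD
    have : v = k := hT.isConnected.dist_eq_zero_iff.mp (by omega)
    subst this
    exact ⟨v, onP_self g r v, onP_self g r v, by rw [SimpleGraph.dist_self]; omega⟩
  | succ D ih =>
    intro v k hD
    by_cases h0 : g.dist v k ≤ D
    · exact ih v k h0
    have hvk : g.dist v k = D + 1 := by omega
    obtain ⟨p, hp⟩ := hT.isConnected.exists_walk_length_eq_dist v k
    rw [hvk] at hp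
    cases p with
    | nil => simp only [SimpleGraph.Walk.length_nil] at hp; omega
    | @cons _ y _ hadj q =>
      rw [SimpleGraph.Walk.length_cons] at hp
      have hq : q.length = D := by omega
      have hyk : g.dist y k ≤ D := hq ▸ SimpleGraph.dist_le q
      have hvy1 : g.dist v y ≤ 1 := adj_dist_le_one hT hadj
      have htri : g.dist v k ≤ g.dist v y + g.dist y k := hT.isConnected.dist_triangle
      have hyk' : g.dist y k = D := by omega
      have hvy : g.dist v y = 1 := by omega
      obtain ⟨z, hz1, hz2, hz3⟩ := ih y k (by omega)
      rcases adj_depth hT (r := r) hadj with hcase | hcase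
      · -- dist r y = dist r v + 1,  v is parent of y
        have hony : onP g r v y := by
          unfold onP; rw [hcase]
          have : g.dist r y ≤ g.dist r v + g.dist v y := hT.isConnected.dist_triangle
          omega
        by_cases hzz : g.dist r z = g.dist r y
        · -- z = y, so v itself on path to k
          have hzy : z = y := onP_eq hT.isConnected hz1 hzz
          subst hzy
          have honvk : onP g r v k := onP_trans hT.isConnected hony hz2
          exact ⟨v, onP_self g r v, honvk, by unfold onP at honvk; omega⟩
        · -- z strictly above y, so z ancestor of v too: contradiction
          exfalso
          have hzv : g.dist r z ≤ g.dist r v := by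
            unfold onP at hz1; omega
          have honzv : onP g r z v := anc_chain hT hz1 hony hzv
          have t : g.dist v k ≤ g.dist v z + g.dist z k := hT.isConnected.dist_triangle
          have hc1 : g.dist v z = g.dist z v := SimpleGraph.dist_comm ..
          unfold onP at honzv hz2
          omega
      · -- dist r v = dist r y + 1, y is parent of v; z works
        have hony : onP g r y v := by
          unfold onP; rw [hcase]
          have : g.dist r v ≤ g.dist r y + g.dist y v := hT.isConnected.dist_triangle
          have : g.dist y v ≤ 1 := by rw [SimpleGraph.dist_comm]; exact hvy1.trans (le_refl 1)
          omega
        refine ⟨z, onP_trans hT.isConnected hz1 hony, hz2, by omega⟩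

end Paths
section Counting

open scoped Classical in
/-- the ancestor of `k` at depth `b` (junk if `b > depth k`). -/
noncomputable def anc (g : SimpleGraph (Fin n)) (r : Fin n) (b : ℕ) (k : Fin n) : Fin n :=
  if hb : ∃ z, g.dist r z = b ∧ onP g r z k then hb.choose else r

/-- children of `x` in the tree rooted at `r`. -/
noncomputable def children (g : SimpleGraph (Fin n)) [DecidableRel g.Adj] (r x : Fin n) :
    Finset (Fin n) :=
  univ.filter (fun y => g.Adj x y ∧ g.dist r y = g.dist r x + 1)

/-- level set of the subtree below `x`. -/
noncomputable def sub (g : SimpleGraph (Fin n)) (r x : Fin n) (a : ℕ) : Finset (Fin n) :=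
  univ.filter (fun k => g.dist r k = a ∧ g.dist r x + g.dist x k = g.dist r k)

/-- common number of children of a vertex at depth `a`. -/
noncomputable def cf (g : SimpleGraph (Fin n)) [DecidableRel g.Adj] (r : Fin n) (a : ℕ) : ℕ :=
  if hx : ∃ x : Fin n, g.dist r x = a then (children g r hx.choose).card else 0

variable [DecidableRel g.Adj] (hT : g.IsTree)
include hT

lemma anc_spec {b : ℕ} {k : Fin n} (hb : b ≤ g.dist r k) :
    g.dist r (anc g r b k) = b ∧ onP g r (anc g r b k) k := by
  obtain ⟨z, hz1, hz2⟩ := anc_exists' (r := r) hT (g.dist r k - b) k (by omega)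
  have hex : ∃ z, g.dist r z = b ∧ onP g r z k := ⟨z, by omega, hz2⟩
  classical
  rw [anc]
  rw [dif_pos hex]
  exact hex.choose_spec

lemma parent_adj {k : Fin n} (hk : 1 ≤ g.dist r k) :
    g.Adj (anc g r (g.dist r k - 1) k) k := by
  obtain ⟨hd, hon⟩ := anc_spec hT (show g.dist r k - 1 ≤ g.dist r k by omega)
  have : g.dist (anc g r (g.dist r k - 1) k) k = 1 := by unfold onP at hon; omega
  exact adj_of_dist_eq_one hT this

lemma degree_children (x : Fin n) :
    g.degree x = (children g r x).card + (if x = r then 0 else 1) := by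
  classical
  rw [← SimpleGraph.card_neighborFinset_eq_degree]
  have hsplit := Finset.card_filter_add_card_filter_not
    (s := g.neighborFinset x) (p := fun y => g.dist r y = g.dist r x + 1)
  have hch : (g.neighborFinset x).filter (fun y => g.dist r y = g.dist r x + 1)
      = children g r x := by
    ext y
    simp only [Finset.mem_filter, SimpleGraph.mem_neighborFinset, children,
      Finset.mem_univ, true_and]
  rw [hch] at hsplit
  by_cases hx : x = r
  · subst hx
    have hempty : (g.neighborFinset x).filter (fun y => ¬ g.dist x y = g.dist x x + 1)
        = ∅ := by
      rw [Finset.filter_eq_empty_iff]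
      intro y hy
      rw [SimpleGraph.mem_neighborFinset] at hy
      rcases adj_depth hT (r := x) hy with hc | hc
      · simpa using hc
      · simp [SimpleGraph.dist_self] at hc
    rw [hempty] at hsplit
    simpa using hsplit.symm
  · have hx1 : 1 ≤ g.dist r x := by
      rcases Nat.eq_zero_or_pos (g.dist r x) with h0 | h0
      · exact absurd (dist_r_eq_zero hT.isConnected h0) hx
      · omega
    have hone : (g.neighborFinset x).filter (fun y => ¬ g.dist r y = g.dist r x + 1)
        = {anc g r (g.dist r x - 1) x} := by
      ext y
      simp only [Finset.mem_filter, SimpleGraph.mem_neighborFinset, Finset.mem_singleton]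
      constructor
      · rintro ⟨hadj, hne⟩
        rcases adj_depth hT (r := r) hadj with hc | hc
        · exact absurd hc hne
        · -- y is a parent of x
          have hdy : g.dist r y = g.dist r x - 1 := by omega
          have honyx : onP g r y x := by
            unfold onP
            have h1 : g.dist y x ≤ 1 := adj_dist_le_one hT hadj.symm
            have h2 : g.dist r x ≤ g.dist r y + g.dist y x := hT.isConnected.dist_triangle
            omega
          obtain ⟨hd', hon'⟩ := anc_spec hT (show g.dist r x - 1 ≤ g.dist r x by omega)
          exact anc_unique hT honyx hon' (by omega)
      · rintro rfl
        obtain ⟨hd', hon'⟩ := anc_spec hT (show g.dist r x - 1 ≤ g.dist r x by omega)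
        refine ⟨(parent_adj hT hx1).symm, by omega⟩
    rw [hone] at hsplit
    simp only [Finset.card_singleton] at hsplit
    rw [if_neg hx]
    omega

lemma children_card (hreg : ∀ x y : Fin n, g.dist r x = g.dist r y → g.degree x = g.degree y)
    {x : Fin n} {a : ℕ} (hx : g.dist r x = a) : (children g r x).card = cf g r a := by
  have hex : ∃ x : Fin n, g.dist r x = a := ⟨x, hx⟩
  rw [cf, dif_pos hex]
  set y := hex.choose with hy
  have hyd : g.dist r y = a := hex.choose_spec
  have hdeg : g.degree x = g.degree y := hreg x y (by omega)
  have e1 := degree_children hT (r := r) x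
  have e2 := degree_children hT (r := r) y
  by_cases ha : a = 0
  · have hxr : x = r := dist_r_eq_zero hT.isConnected (by omega)
    have hyr : y = r := dist_r_eq_zero hT.isConnected (by omega)
    rw [hxr, hyr]
  · have hxr : x ≠ r := by
      intro hc; rw [hc, SimpleGraph.dist_self] at hx; exact ha hx.symm
    have hyr : y ≠ r := by
      intro hc; rw [hc, SimpleGraph.dist_self] at hyd; exact ha hyd.symm
    rw [if_neg hxr] at e1
    rw [if_neg hyr] at e2
    omega

lemma sub_base (x : Fin n) : sub g r x (g.dist r x) = {x} := by
  ext k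
  simp only [sub, Finset.mem_filter, Finset.mem_univ, true_and, Finset.mem_singleton]
  constructor
  · rintro ⟨h1, h2⟩
    have : g.dist x k = 0 := by omega
    exact (hT.isConnected.dist_eq_zero_iff.mp this).symm
  · rintro rfl
    simp [SimpleGraph.dist_self]

lemma sub_succ (hreg : ∀ x y : Fin n, g.dist r x = g.dist r y → g.degree x = g.degree y)
    {x : Fin n} {a : ℕ} (hxa : g.dist r x ≤ a) :
    (sub g r x (a+1)).card = cf g r a * (sub g r x a).card := by
  classical
  have hmem : ∀ k ∈ sub g r x (a+1), anc g r a k ∈ sub g r x a := by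
    intro k hk
    simp only [sub, Finset.mem_filter, Finset.mem_univ, true_and] at hk ⊢
    obtain ⟨hk1, hk2⟩ := hk
    obtain ⟨hd, hon⟩ := anc_spec hT (show a ≤ g.dist r k by omega)
    refine ⟨hd, ?_⟩
    have honx : onP g r x k := hk2
    have h3 := anc_chain hT honx hon (by omega)
    unfold onP at h3
    omega
  rw [Finset.card_eq_sum_card_fiberwise hmem]
  have hfib : ∀ k' ∈ sub g r x a,
      ((sub g r x (a+1)).filter (fun k => anc g r a k = k')) = children g r k' := by
    intro k' hk'
    simp only [sub, Finset.mem_filter, Finset.mem_univ, true_and] at hk'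
    obtain ⟨hk'd, hk'on⟩ := hk'
    ext y
    simp only [Finset.mem_filter, sub, children, Finset.mem_univ, true_and]
    constructor
    · rintro ⟨⟨hy1, hy2⟩, hy3⟩
      obtain ⟨hd, hon⟩ := anc_spec hT (show a ≤ g.dist r y by omega)
      rw [hy3] at hd hon
      have hdk : g.dist k' y = 1 := by unfold onP at hon; omega
      exact ⟨adj_of_dist_eq_one hT hdk, by omega⟩
    · rintro ⟨hadj, hdy⟩
      have hony : onP g r k' y := by
        unfold onP
        have h1 : g.dist k' y ≤ 1 := adj_dist_le_one hT hadj
        have h2 : g.dist r y ≤ g.dist r k' + g.dist k' y := hT.isConnected.dist_triangle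
        omega
      have honxk' : onP g r x k' := hk'on
      have honxy : onP g r x y := onP_trans hT.isConnected honxk' hony
      refine ⟨⟨by omega, honxy⟩, ?_⟩
      obtain ⟨hd, hon⟩ := anc_spec hT (show a ≤ g.dist r y by omega)
      exact anc_unique hT hon hony (by omega)
  calc ∑ k' ∈ sub g r x a, ((sub g r x (a+1)).filter (fun k => anc g r a k = k')).card
      = ∑ k' ∈ sub g r x a, cf g r a := by
        refine Finset.sum_congr rfl fun k' hk' => ?_
        rw [hfib k' hk']
        have hk'd : g.dist r k' = a := by
          simp only [sub, Finset.mem_filter] at hk'; exact hk'.2.1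
        exact children_card hT hreg hk'd
    _ = cf g r a * (sub g r x a).card := by
        rw [Finset.sum_const, smul_eq_mul, mul_comm]

lemma sub_card (hreg : ∀ x y : Fin n, g.dist r x = g.dist r y → g.degree x = g.degree y)
    {x : Fin n} {a : ℕ} (hxa : g.dist r x ≤ a) :
    (sub g r x a).card = ∏ s ∈ Ico (g.dist r x) a, cf g r s := by
  induction a, hxa using Nat.le_induction with
  | base => rw [sub_base hT, Finset.card_singleton, Finset.Ico_self, Finset.prod_empty]
  | succ a hxa ih =>
    rw [sub_succ hT hreg hxa, ih, Finset.prod_Ico_succ_top hxa, mul_comm]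

end Counting
section Numeric

/-- product of branching numbers over levels in `[b, a)`. -/
def Qp (c : ℕ → ℕ) (b a : ℕ) : ℕ := ∏ s ∈ Ico b a, c s

/-- the count of vertices at depth `a` within distance `t` of a vertex at depth `L`. -/
def Cnum (c : ℕ → ℕ) (t L a : ℕ) : ℕ :=
  if (L + a + 1 - t)/2 ≤ min L a then Qp c ((L + a + 1 - t)/2) a else 0

variable {c : ℕ → ℕ}

lemma Qp_self (b : ℕ) : Qp c b b = 1 := by rw [Qp, Finset.Ico_self, Finset.prod_empty]

lemma Qp_pos {a : ℕ} (hpos : ∀ s, s < a → 1 ≤ c s) (b : ℕ) : 1 ≤ Qp c b a := by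
  refine Finset.one_le_prod' fun s hs => ?_
  rw [Finset.mem_Ico] at hs
  exact hpos s hs.2

lemma Qp_mono_left {b b' a : ℕ} (hb : b ≤ b') (hpos : ∀ s, s < a → 1 ≤ c s) :
    Qp c b' a ≤ Qp c b a := by
  rcases le_or_gt b' a with hba | hba
  · have hmul : Qp c b b' * Qp c b' a = Qp c b a := by
      simp only [Qp]
      exact Finset.prod_Ico_consecutive c hb hba
    rw [← hmul]
    exact Nat.le_mul_of_pos_left _ (Qp_pos (fun s hs => hpos s (by omega)) b)
  · have hone : Qp c b' a = 1 := by
      rw [Qp, Finset.Ico_eq_empty (by omega), Finset.prod_empty]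
    rw [hone]
    exact Qp_pos hpos b

lemma Qp_shift1 {x y : ℕ} (hm : ∀ s, x ≤ s → s < y → c (s+1) ≤ c s) :
    Qp c (x+1) (y+1) ≤ Qp c x y := by
  rw [Qp, Qp, Finset.prod_Ico_eq_prod_range, Finset.prod_Ico_eq_prod_range]
  have he : y + 1 - (x + 1) = y - x := by omega
  rw [he]
  refine Finset.prod_le_prod' fun i hi => ?_
  rw [Finset.mem_range] at hi
  have e1 : x + 1 + i = (x + i) + 1 := by omega
  rw [e1]
  exact hm (x + i) (by omega) (by omega)

lemma Qp_shift2 {x y : ℕ} (hm : ∀ s, x ≤ s → s < y → c (s+2) ≤ c s) :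
    Qp c (x+2) (y+2) ≤ Qp c x y := by
  rw [Qp, Qp, Finset.prod_Ico_eq_prod_range, Finset.prod_Ico_eq_prod_range]
  have he : y + 2 - (x + 2) = y - x := by omega
  rw [he]
  refine Finset.prod_le_prod' fun i hi => ?_
  rw [Finset.mem_range] at hi
  have e1 : x + 2 + i = (x + i) + 2 := by omega
  rw [e1]
  exact hm (x + i) (by omega) (by omega)

lemma Qp_succ_top {b a : ℕ} (hba : b ≤ a) : Qp c b (a+1) = Qp c b a * c a :=
  Finset.prod_Ico_succ_top hba c

lemma Qp_bot {a : ℕ} (ha : 1 ≤ a) : Qp c 0 a = c 0 * Qp c 1 a :=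
  Finset.prod_eq_prod_Ico_succ_bot ha c

/-- the key downward induction. -/
lemma Kmain (h t ℓ : ℕ)
    (hmono : ∀ s s', s ≤ s' → s' < h → c s' ≤ c s)
    (hth : t + ℓ + 1 ≤ h) :
    ∀ dm m, m + dm = ℓ → ℓ ≤ t + 2*m →
    Qp c (ℓ+1) (t+ℓ+1) + ∑ e ∈ Icc m ℓ, Qp c (e+1) (t+2*e-ℓ)
      ≤ (∑ e ∈ Icc m ℓ, Qp c e (t+2*e-ℓ)) + Qp c (m+1) (t+2*m-ℓ) := by
  intro dm
  induction dm with
  | zero =>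
    intro m hm hlm
    have hmℓ : m = ℓ := by omega
    subst hmℓ
    rw [Finset.Icc_self, Finset.sum_singleton, Finset.sum_singleton]
    have e1 : t + 2*m - m = t + m := by omega
    rw [e1]
    have key : Qp c (m+1) (t+m+1) ≤ Qp c m (t+m) := by
      apply Qp_shift1
      intro s hs1 hs2
      exact hmono s (s+1) (by omega) (by omega)
    omega
  | succ dm ih =>
    intro m hm hlm
    have hmlt : m < ℓ := by omega
    have hins : insert m (Icc (m+1) ℓ) = Icc m ℓ := by
      rw [Finset.Icc_add_one_left_eq_Ioc]
      exact Finset.Ioc_insert_left (by omega)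
    have hnm : m ∉ Icc (m+1) ℓ := by
      simp only [Finset.mem_Icc]; omega
    rw [← hins, Finset.sum_insert hnm, Finset.sum_insert hnm]
    have ihm := ih (m+1) (by omega) (by omega)
    have key : Qp c (m+2) (t+2*(m+1)-ℓ) ≤ Qp c m (t+2*m-ℓ) := by
      have e2 : t+2*(m+1)-ℓ = (t+2*m-ℓ)+2 := by omega
      rw [e2]
      apply Qp_shift2
      intro s hs1 hs2
      exact hmono s (s+2) (by omega) (by omega)
    have e3 : m + 1 + 1 = m + 2 := by omega
    rw [e3] at ihm
    omega

lemma Cnum_le {h t ℓ a : ℕ} (hpos : ∀ s, s < h → 1 ≤ c s) (ha : a ≤ h)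
    (hne : a ≠ t + ℓ + 1) : Cnum c t (ℓ+1) a ≤ Cnum c t ℓ a := by
  rw [Cnum, Cnum]
  by_cases hj : ((ℓ+1) + a + 1 - t)/2 ≤ min (ℓ+1) a
  · rw [if_pos hj]
    by_cases hi : (ℓ + a + 1 - t)/2 ≤ min ℓ a
    · rw [if_pos hi]
      exact Qp_mono_left (by omega) (fun s hs => hpos s (by omega))
    · exfalso
      omega
  · rw [if_neg hj]
    exact Nat.zero_le _

lemma Cnum_eval_i {t ℓ e : ℕ} (he : e ≤ ℓ) (hle : ℓ ≤ t + e) :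
    Cnum c t ℓ (t + 2*e - ℓ) = Qp c e (t + 2*e - ℓ) := by
  rw [Cnum]
  have hm : (ℓ + (t + 2*e - ℓ) + 1 - t)/2 = e := by omega
  rw [hm, if_pos (by omega)]

lemma Cnum_eval_j {t ℓ e : ℕ} (he : e ≤ ℓ) (hle : ℓ + 1 ≤ t + e) :
    Cnum c t (ℓ+1) (t + 2*e - ℓ) = Qp c (e+1) (t + 2*e - ℓ) := by
  rw [Cnum]
  have hm : ((ℓ+1) + (t + 2*e - ℓ) + 1 - t)/2 = e + 1 := by omega
  rw [hm, if_pos (by omega)]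

lemma Cnum_eval_j_bot {t ℓ : ℕ} (ht : 1 ≤ t) (htl : t ≤ ℓ) :
    Cnum c t (ℓ+1) (ℓ - t) = 0 := by
  rw [Cnum, if_neg]
  omega

lemma Cnum_eval_star (t ℓ : ℕ) :
    Cnum c t (ℓ+1) (t + ℓ + 1) = Qp c (ℓ+1) (t+ℓ+1) := by
  rw [Cnum]
  have hm : ((ℓ+1) + (t+ℓ+1) + 1 - t)/2 = ℓ+1 := by omega
  rw [hm, if_pos (by omega)]

lemma Cnum_zero (L a : ℕ) : Cnum c 0 L a = if a = L then 1 else 0 := by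
  rw [Cnum]
  by_cases hc : a = L
  · subst hc
    rw [if_pos (by omega), if_pos rfl]
    have he : (a + a + 1 - 0)/2 = a := by omega
    rw [he, Qp_self]
  · rw [if_neg (by omega), if_neg hc]

/-- the key slack inequality compensating for the deficit at depth `t+ℓ+1`. -/
lemma key_slack (h t ℓ : ℕ)
    (hmono : ∀ s s', s ≤ s' → s' < h → c s' ≤ c s)
    (hpos : ∀ s, s < h → 1 ≤ c s)
    (hroot : ∀ s', 1 ≤ s' → s' < h → c s' + 1 ≤ c 0)
    (hth : t + ℓ + 1 ≤ h) (ht : 1 ≤ t) :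
    (∑ e ∈ Icc (ℓ - t) ℓ, Cnum c t (ℓ+1) (t+2*e-ℓ)) + Cnum c t (ℓ+1) (t+ℓ+1)
      ≤ ∑ e ∈ Icc (ℓ - t) ℓ, Cnum c t ℓ (t+2*e-ℓ) := by
  rw [Cnum_eval_star]
  rcases le_or_gt t ℓ with htl | htl
  · -- t ≤ ℓ
    set E0 := ℓ - t with hE0
    have hE1 : E0 + 1 ≤ ℓ := by omega
    have hins : insert E0 (Icc (E0+1) ℓ) = Icc E0 ℓ := by
      rw [Finset.Icc_add_one_left_eq_Ioc]
      exact Finset.Ioc_insert_left (by omega)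
    have hnm : E0 ∉ Icc (E0+1) ℓ := by simp only [Finset.mem_Icc]; omega
    rw [← hins, Finset.sum_insert hnm, Finset.sum_insert hnm]
    -- bottom terms
    have hb1 : Cnum c t (ℓ+1) (t+2*E0-ℓ) = 0 := by
      have e1 : t + 2*E0 - ℓ = ℓ - t := by omega
      rw [e1]
      exact Cnum_eval_j_bot ht htl
    have hb2 : Cnum c t ℓ (t+2*E0-ℓ) = 1 := by
      have e1 := Cnum_eval_i (c := c) (t := t) (ℓ := ℓ) (e := E0) (by omega) (by omega)
      rw [e1]
      have e2 : t + 2*E0 - ℓ = E0 := by omega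
      rw [e2, Qp_self]
    rw [hb1, hb2]
    -- rewrite the remaining sums via evaluations
    have hs1 : ∑ e ∈ Icc (E0+1) ℓ, Cnum c t (ℓ+1) (t+2*e-ℓ)
        = ∑ e ∈ Icc (E0+1) ℓ, Qp c (e+1) (t+2*e-ℓ) := by
      refine Finset.sum_congr rfl fun e hemem => ?_
      rw [Finset.mem_Icc] at hemem
      exact Cnum_eval_j (by omega) (by omega)
    have hs2 : ∑ e ∈ Icc (E0+1) ℓ, Cnum c t ℓ (t+2*e-ℓ)
        = ∑ e ∈ Icc (E0+1) ℓ, Qp c e (t+2*e-ℓ) := by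
      refine Finset.sum_congr rfl fun e hemem => ?_
      rw [Finset.mem_Icc] at hemem
      exact Cnum_eval_i (by omega) (by omega)
    rw [hs1, hs2]
    have hK := Kmain h t ℓ hmono hth (ℓ - (E0+1)) (E0+1) (by omega) (by omega)
    have htr : Qp c (E0+1+1) (t+2*(E0+1)-ℓ) = 1 := by
      have e1 : t+2*(E0+1)-ℓ = E0+1+1 := by omega
      rw [e1, Qp_self]
    rw [htr] at hK
    omega
  · -- ℓ < t
    have hE0 : ℓ - t = 0 := by omega
    rw [hE0]
    have hs1 : ∑ e ∈ Icc 0 ℓ, Cnum c t (ℓ+1) (t+2*e-ℓ)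
        = ∑ e ∈ Icc 0 ℓ, Qp c (e+1) (t+2*e-ℓ) := by
      refine Finset.sum_congr rfl fun e hemem => ?_
      rw [Finset.mem_Icc] at hemem
      exact Cnum_eval_j (by omega) (by omega)
    have hs2 : ∑ e ∈ Icc 0 ℓ, Cnum c t ℓ (t+2*e-ℓ)
        = ∑ e ∈ Icc 0 ℓ, Qp c e (t+2*e-ℓ) := by
      refine Finset.sum_congr rfl fun e hemem => ?_
      rw [Finset.mem_Icc] at hemem
      exact Cnum_eval_i (by omega) (by omega)
    rw [hs1, hs2]
    rcases Nat.eq_zero_or_pos ℓ with hl0 | hl0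
    · -- ℓ = 0 : a single term
      subst hl0
      rw [Finset.Icc_self, Finset.sum_singleton, Finset.sum_singleton]
      simp only [Nat.mul_zero, Nat.add_zero, Nat.sub_zero, Nat.zero_add]
      -- goal: Qp c 1 t + Qp c (0+1) (t+1) ≤ Qp c 0 t
      have e1 : Qp c 1 (t+1) = Qp c 1 t * c t := Qp_succ_top ht
      have e2 : Qp c 0 t = c 0 * Qp c 1 t := Qp_bot ht
      have e3 : c t + 1 ≤ c 0 := hroot t ht (by omega)
      have e4 : Qp c 1 t * (c t + 1) ≤ Qp c 1 t * c 0 := Nat.mul_le_mul_left _ e3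
      calc Qp c 1 t + Qp c (0+1) (t+0+1) = Qp c 1 t * (c t + 1) := by
            rw [show t + 0 + 1 = t + 1 by omega, e1]; ring
        _ ≤ Qp c 1 t * c 0 := e4
        _ = Qp c 0 t := by rw [e2]; ring
    · -- ℓ ≥ 1
      have hins : insert 0 (Icc 1 ℓ) = Icc 0 ℓ := by
        rw [show Icc 1 ℓ = Ioc 0 ℓ from Finset.Icc_add_one_left_eq_Ioc 0 ℓ]
        exact Finset.Ioc_insert_left (by omega)
      have hnm : 0 ∉ Icc 1 ℓ := by simp only [Finset.mem_Icc]; omega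
      rw [← hins, Finset.sum_insert hnm, Finset.sum_insert hnm]
      have hK := Kmain h t ℓ hmono hth (ℓ - 1) 1 (by omega) (by omega)
      -- extra: Qp c 1 (t-ℓ) + Qp c 2 (t+2-ℓ) ≤ Qp c 0 (t-ℓ)
      have hextra : Qp c (0+1) (t+2*0-ℓ) + Qp c (1+1) (t+2*1-ℓ) ≤ Qp c 0 (t+2*0-ℓ) := by
        have e0 : t + 2*0 - ℓ = t - ℓ := by omega
        have e1 : t + 2*1 - ℓ = (t - ℓ) + 1 + 1 := by omega
        have e2 : (0:ℕ) + 1 = 1 := by norm_num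
        rw [e0, e1, e2]
        have s1 : Qp c (1+1) ((t-ℓ)+1+1) ≤ Qp c 1 ((t-ℓ)+1) := by
          apply Qp_shift1
          intro s hs1 hs2
          exact hmono s (s+1) (by omega) (by omega)
        have s2 : Qp c 1 ((t-ℓ)+1) = Qp c 1 (t-ℓ) * c (t-ℓ) := Qp_succ_top (by omega)
        have s3 : c (t-ℓ) + 1 ≤ c 0 := hroot (t-ℓ) (by omega) (by omega)
        have s4 : Qp c 0 (t-ℓ) = c 0 * Qp c 1 (t-ℓ) := Qp_bot (by omega)
        have s5 : Qp c 1 (t-ℓ) * (c (t-ℓ) + 1) ≤ Qp c 1 (t-ℓ) * c 0 :=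
          Nat.mul_le_mul_left _ s3
        calc Qp c 1 (t-ℓ) + Qp c (1+1) ((t-ℓ)+1+1)
            ≤ Qp c 1 (t-ℓ) + Qp c 1 (t-ℓ) * c (t-ℓ) := by rw [← s2]; omega
          _ = Qp c 1 (t-ℓ) * (c (t-ℓ) + 1) := by ring
          _ ≤ Qp c 1 (t-ℓ) * c 0 := s5
          _ = Qp c 0 (t-ℓ) := by rw [s4]; ring
      omega

lemma num_le (h t ℓ : ℕ)
    (hmono : ∀ s s', s ≤ s' → s' < h → c s' ≤ c s)
    (hpos : ∀ s, s < h → 1 ≤ c s)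
    (hroot : ∀ s', 1 ≤ s' → s' < h → c s' + 1 ≤ c 0)
    (hl : ℓ + 1 ≤ h) :
    ∑ a ∈ range (h+1), Cnum c t (ℓ+1) a ≤ ∑ a ∈ range (h+1), Cnum c t ℓ a := by
  rcases Nat.eq_zero_or_pos t with ht0 | ht
  · subst ht0
    simp only [Cnum_zero]
    rw [Finset.sum_ite_eq' (range (h+1)) (ℓ+1) (fun _ => 1),
      Finset.sum_ite_eq' (range (h+1)) ℓ (fun _ => 1)]
    rw [if_pos (by simp only [Finset.mem_range]; omega),
      if_pos (by simp only [Finset.mem_range]; omega)]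
  by_cases hstar : t + ℓ + 1 ≤ h
  · -- hard case: a deficit at a = t+ℓ+1 compensated by the slack terms
    set A := (Icc (ℓ - t) ℓ).image (fun e => t + 2*e - ℓ) with hA
    have hAsub : A ⊆ range (h+1) := by
      intro a ha
      rw [hA, Finset.mem_image] at ha
      obtain ⟨e, he, rfl⟩ := ha
      rw [Finset.mem_Icc] at he
      rw [Finset.mem_range]
      omega
    have hstar_notA : (t+ℓ+1) ∉ A := by
      rw [hA, Finset.mem_image]
      rintro ⟨e, he, hee⟩
      rw [Finset.mem_Icc] at he
      omega
    have hinj : ∀ e1 ∈ Icc (ℓ-t) ℓ, ∀ e2 ∈ Icc (ℓ-t) ℓ, t+2*e1-ℓ = t+2*e2-ℓ → e1 = e2 := by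
      intro e1 h1 e2 h2 hee
      rw [Finset.mem_Icc] at h1 h2
      omega
    have h1 : ∑ a ∈ A, Cnum c t (ℓ+1) a = ∑ e ∈ Icc (ℓ-t) ℓ, Cnum c t (ℓ+1) (t+2*e-ℓ) :=
      Finset.sum_image hinj
    have h2 : ∑ a ∈ A, Cnum c t ℓ a = ∑ e ∈ Icc (ℓ-t) ℓ, Cnum c t ℓ (t+2*e-ℓ) :=
      Finset.sum_image hinj
    have hsdj : ∑ a ∈ range (h+1) \ A, Cnum c t (ℓ+1) a + ∑ a ∈ A, Cnum c t (ℓ+1) a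
        = ∑ a ∈ range (h+1), Cnum c t (ℓ+1) a := Finset.sum_sdiff hAsub
    have hsdi : ∑ a ∈ range (h+1) \ A, Cnum c t ℓ a + ∑ a ∈ A, Cnum c t ℓ a
        = ∑ a ∈ range (h+1), Cnum c t ℓ a := Finset.sum_sdiff hAsub
    have hstar_mem : t+ℓ+1 ∈ range (h+1) \ A := by
      rw [Finset.mem_sdiff, Finset.mem_range]
      exact ⟨by omega, hstar_notA⟩
    have h3 : ∑ a ∈ (range (h+1) \ A).erase (t+ℓ+1), Cnum c t (ℓ+1) a
        + Cnum c t (ℓ+1) (t+ℓ+1) = ∑ a ∈ range (h+1) \ A, Cnum c t (ℓ+1) a :=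
      Finset.sum_erase_add _ _ hstar_mem
    have h4 : ∑ a ∈ (range (h+1) \ A).erase (t+ℓ+1), Cnum c t (ℓ+1) a
        ≤ ∑ a ∈ (range (h+1) \ A).erase (t+ℓ+1), Cnum c t ℓ a := by
      refine Finset.sum_le_sum fun a ha => ?_
      rw [Finset.mem_erase, Finset.mem_sdiff, Finset.mem_range] at ha
      exact Cnum_le hpos (by omega) ha.1
    have h5 : ∑ a ∈ (range (h+1) \ A).erase (t+ℓ+1), Cnum c t ℓ a
        ≤ ∑ a ∈ range (h+1) \ A, Cnum c t ℓ a :=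
      Finset.sum_le_sum_of_subset (Finset.erase_subset _ _)
    have hkey := key_slack h t ℓ hmono hpos hroot hstar ht
    omega
  · -- easy case: termwise
    refine Finset.sum_le_sum fun a ha => ?_
    rw [Finset.mem_range] at ha
    exact Cnum_le hpos (by omega) (by omega)

lemma num_lt (h ℓ : ℕ)
    (hpos : ∀ s, s < h → 1 ≤ c s)
    (hc0 : 2 ≤ c 0)
    (hl : ℓ + 1 ≤ h) :
    ∑ a ∈ range (h+1), Cnum c (h-ℓ) (ℓ+1) a < ∑ a ∈ range (h+1), Cnum c (h-ℓ) ℓ a := by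
  set t := h - ℓ with htdef
  have ht : 1 ≤ t := by omega
  have htl : t + ℓ = h := by omega
  apply Finset.sum_lt_sum
  · intro a ha
    rw [Finset.mem_range] at ha
    exact Cnum_le hpos (by omega) (by omega)
  · rcases le_or_gt t ℓ with hcase | hcase
    · refine ⟨ℓ - t, by rw [Finset.mem_range]; omega, ?_⟩
      have hb1 : Cnum c t (ℓ+1) (ℓ-t) = 0 := Cnum_eval_j_bot ht hcase
      have hb2 : Cnum c t ℓ (ℓ-t) = 1 := by
        have e1 := Cnum_eval_i (c := c) (t := t) (ℓ := ℓ) (e := ℓ - t) (by omega) (by omega)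
        have e2 : t + 2*(ℓ-t) - ℓ = ℓ - t := by omega
        rw [e2] at e1
        rw [e1]
        have e3 : ℓ - t = ℓ - t := rfl
        rw [show Qp c (ℓ-t) (ℓ-t) = 1 from Qp_self _]
      rw [hb1, hb2]
      omega
    · refine ⟨t - ℓ, by rw [Finset.mem_range]; omega, ?_⟩
      have hb1 : Cnum c t (ℓ+1) (t-ℓ) = Qp c 1 (t-ℓ) := by
        have e1 := Cnum_eval_j (c := c) (t := t) (ℓ := ℓ) (e := 0) (by omega) (by omega)
        have e2 : t + 2*0 - ℓ = t - ℓ := by omega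
        rw [e2] at e1
        exact e1
      have hb2 : Cnum c t ℓ (t-ℓ) = Qp c 0 (t-ℓ) := by
        have e1 := Cnum_eval_i (c := c) (t := t) (ℓ := ℓ) (e := 0) (by omega) (by omega)
        have e2 : t + 2*0 - ℓ = t - ℓ := by omega
        rw [e2] at e1
        exact e1
      rw [hb1, hb2]
      have e3 : Qp c 0 (t-ℓ) = c 0 * Qp c 1 (t-ℓ) := Qp_bot (by omega)
      have e4 : 1 ≤ Qp c 1 (t-ℓ) := Qp_pos (fun s hs => hpos s (by omega)) 1
      rw [e3]
      nlinarith
end Numeric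
section BallLevel

variable [DecidableRel g.Adj] (hT : g.IsTree)
include hT

lemma ball_level (hreg : ∀ x y : Fin n, g.dist r x = g.dist r y → g.degree x = g.degree y)
    (v : Fin n) (t a : ℕ) :
    (univ.filter (fun k => g.dist r k = a ∧ g.dist v k ≤ t)).card
      = Cnum (cf g r) t (g.dist r v) a := by
  set L := g.dist r v with hL
  set m := (L + a + 1 - t)/2 with hm
  by_cases hfeas : m ≤ min L a
  · rw [Cnum, if_pos hfeas, Qp]
    have hmL : m ≤ L := by omega
    obtain ⟨hancd, hancon⟩ := anc_spec hT (show m ≤ g.dist r v by omega)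
    have hset : univ.filter (fun k => g.dist r k = a ∧ g.dist v k ≤ t)
        = sub g r (anc g r m v) a := by
      ext k
      simp only [Finset.mem_filter, Finset.mem_univ, true_and, sub]
      constructor
      · rintro ⟨hk1, hk2⟩
        obtain ⟨z, hz1, hz2, hz3⟩ := meet (r := r) hT (g.dist v k) v k le_rfl
        have hzm : m ≤ g.dist r z := by omega
        have honz : onP g r (anc g r m v) z := anc_chain hT hancon hz1 (by omega)
        have honk : onP g r (anc g r m v) k := onP_trans hT.isConnected honz hz2
        unfold onP at honk
        exact ⟨hk1, by omega⟩
      · rintro ⟨hk1, hk2⟩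
        refine ⟨hk1, ?_⟩
        have h1 : g.dist v k ≤ g.dist v (anc g r m v) + g.dist (anc g r m v) k :=
          hT.isConnected.dist_triangle
        have h2 : g.dist v (anc g r m v) = g.dist (anc g r m v) v :=
          SimpleGraph.dist_comm ..
        unfold onP at hancon
        omega
    rw [hset, sub_card hT hreg (by omega), hancd]
  · rw [Cnum, if_neg hfeas]
    rw [Finset.card_eq_zero, Finset.filter_eq_empty_iff]
    intro k _
    rintro ⟨hk1, hk2⟩
    obtain ⟨z, hz1, hz2, hz3⟩ := meet (r := r) hT (g.dist v k) v k le_rfl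
    unfold onP at hz1 hz2
    omega

lemma ballCount_eq_card (v : Fin n) (t : ℕ) :
    ballCount g v t = (univ.filter (fun k => g.dist v k ≤ t)).card := by
  rw [ballCount, Nat.card_eq_fintype_card]
  rw [Fintype.card_subtype]
  rfl

lemma ballCount_sum {h : ℕ}
    (hreg : ∀ x y : Fin n, g.dist r x = g.dist r y → g.degree x = g.degree y)
    (hmax : ∀ k, g.dist r k ≤ h) (v : Fin n) (t : ℕ) :
    ballCount g v t = ∑ a ∈ range (h+1), Cnum (cf g r) t (g.dist r v) a := by
  rw [ballCount_eq_card hT]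
  rw [Finset.card_eq_sum_card_fiberwise
    (f := fun k => g.dist r k) (t := range (h+1))
    (fun k _ => by simp only [Finset.mem_coe, Finset.mem_range]; exact Nat.lt_succ_of_le (hmax k))]
  refine Finset.sum_congr rfl fun a _ => ?_
  rw [← ball_level hT hreg v t a]
  congr 1
  ext k
  simp only [Finset.mem_filter, Finset.mem_univ, true_and]
  tauto

end BallLevel

section Structure

variable [DecidableRel g.Adj] (hT : g.IsTree)
include hT

/-- level-regularity from the third clause of monotone hierarchy. -/
lemma level_reg
    (h3 : ∀ i j : Fin n, g.dist r i = g.dist r j → g.degree i = g.degree j →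
      (∃ k l, Succ g r i k ∧ Succ g r j l ∧ g.dist r k = g.dist r l ∧
        g.degree l < g.degree k) →
      ∀ k l, Succ g r i k → Succ g r j l → g.dist r k = g.dist r l →
        g.degree l ≤ g.degree k) :
    ∀ x y : Fin n, g.dist r x = g.dist r y → g.degree x = g.degree y := by
  have key : ∀ x y : Fin n, g.dist r x = g.dist r y → g.degree y < g.degree x → False := by
    intro x y hd hlt
    have hd0 : g.dist r x ≠ 0 := by
      intro h0
      have hx : x = r := dist_r_eq_zero hT.isConnected h0
      have hy : y = r := dist_r_eq_zero hT.isConnected (by omega)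
      rw [hx, hy] at hlt
      omega
    have hxr : x ≠ r := fun hc => hd0 (by rw [hc, SimpleGraph.dist_self])
    have hyr : y ≠ r := fun hc => by
      rw [hc] at hd
      rw [SimpleGraph.dist_self] at hd
      exact hd0 hd
    have hsx : Succ g r r x := ⟨Ne.symm hxr, by rw [SimpleGraph.dist_self]; omega⟩
    have hsy : Succ g r r y := ⟨Ne.symm hyr, by rw [SimpleGraph.dist_self]; omega⟩
    have := h3 r r rfl rfl ⟨x, y, hsx, hsy, hd, hlt⟩ y x hsy hsx (by omega)
    omega
  intro x y hd
  rcases Nat.lt_trichotomy (g.degree x) (g.degree y) with hc | hc | hc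
  · exact absurd (key y x hd.symm hc) (fun h => h)
  · exact hc
  · exact absurd (key x y hd hc) (fun h => h)

/-- every vertex has depth at most `h`, given the leaf condition. -/
lemma depth_bounds {h : ℕ}
    (h4 : ∀ x : Fin n, g.degree x = 1 → g.dist r x = h)
    (hnr : ∃ v : Fin n, 1 ≤ g.dist r v) :
    (∀ k, g.dist r k ≤ h) ∧ (∃ k, g.dist r k = h) := by
  obtain ⟨v0, hv0⟩ := hnr
  have hne : (univ : Finset (Fin n)).Nonempty := ⟨v0, Finset.mem_univ v0⟩
  obtain ⟨ks, -, hks⟩ := Finset.exists_max_image univ (fun k => g.dist r k) hne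
  have hksmax : ∀ k, g.dist r k ≤ g.dist r ks := fun k => hks k (Finset.mem_univ k)
  have hks1 : 1 ≤ g.dist r ks := le_trans hv0 (hksmax v0)
  have hksr : ks ≠ r := fun hc => by
    rw [hc, SimpleGraph.dist_self] at hks1; omega
  have hch : children g r ks = ∅ := by
    rw [children, Finset.filter_eq_empty_iff]
    intro y _
    rintro ⟨hadj, hdy⟩
    have := hksmax y
    omega
  have hdeg : g.degree ks = 1 := by
    rw [degree_children hT (r := r), hch, if_neg hksr]
    simp
  have hksh : g.dist r ks = h := h4 ks hdeg
  exact ⟨fun k => hksh ▸ hksmax k, ⟨ks, hksh⟩⟩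

lemma level_exists {h : ℕ} (hmax : ∀ k, g.dist r k ≤ h) (hex : ∃ k, g.dist r k = h)
    {a : ℕ} (ha : a ≤ h) : ∃ x : Fin n, g.dist r x = a := by
  obtain ⟨k, hk⟩ := hex
  obtain ⟨hd, -⟩ := anc_spec hT (r := r) (b := a) (k := k) (by omega)
  exact ⟨anc g r a k, hd⟩

/-- the root has a child, provided some vertex has positive depth. -/
lemma root_child (hnr : ∃ v : Fin n, 1 ≤ g.dist r v) : 1 ≤ (children g r r).card := by
  obtain ⟨v, hv⟩ := hnr
  obtain ⟨p, hp⟩ := hT.isConnected.exists_walk_length_eq_dist r v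
  cases p with
  | nil => rw [SimpleGraph.Walk.length_nil] at hp; omega
  | @cons _ y _ hadj q =>
    have hy : g.dist r y = 1 := by
      rcases adj_depth hT (r := r) hadj with hc | hc
      · rw [SimpleGraph.dist_self] at hc; omega
      · rw [SimpleGraph.dist_self] at hc; omega
    refine Finset.card_pos.mpr ⟨y, ?_⟩
    simp only [children, Finset.mem_filter, Finset.mem_univ, true_and]
    exact ⟨hadj, by rw [SimpleGraph.dist_self]; omega⟩

end Structure
section CfProps

variable [DecidableRel g.Adj] (hT : g.IsTree)
include hT

lemma cf_zero_eq (hreg : ∀ x y : Fin n, g.dist r x = g.dist r y → g.degree x = g.degree y) :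
    cf g r 0 = g.degree r := by
  have hd : g.dist r r = 0 := SimpleGraph.dist_self
  rw [← children_card hT hreg hd, degree_children hT (r := r) r, if_pos rfl]
  omega

lemma cf_pos {h : ℕ}
    (hreg : ∀ x y : Fin n, g.dist r x = g.dist r y → g.degree x = g.degree y)
    (hmax : ∀ k, g.dist r k ≤ h) (hex : ∃ k, g.dist r k = h)
    (h4 : ∀ x : Fin n, g.degree x = 1 → g.dist r x = h)
    (hnr : ∃ v : Fin n, 1 ≤ g.dist r v)
    {a : ℕ} (ha : a < h) : 1 ≤ cf g r a := by
  obtain ⟨x, hx⟩ := level_exists hT hmax hex (le_of_lt ha)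
  rw [← children_card hT hreg hx]
  by_contra hcon
  push_neg at hcon
  have hc0 : (children g r x).card = 0 := by omega
  by_cases hxr : x = r
  · subst hxr
    have := root_child hT hnr
    omega
  · have hdeg : g.degree x = 1 := by
      rw [degree_children hT (r := r) x, if_neg hxr, hc0]
    have := h4 x hdeg
    omega

lemma cf_mono {h : ℕ}
    (hreg : ∀ x y : Fin n, g.dist r x = g.dist r y → g.degree x = g.degree y)
    (hmax : ∀ k, g.dist r k ≤ h) (hex : ∃ k, g.dist r k = h)
    (h1 : ∀ i j : Fin n, g.dist r i < g.dist r j → g.degree j ≤ g.degree i)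
    {s s' : ℕ} (hss : s ≤ s') (hs' : s' < h) : cf g r s' ≤ cf g r s := by
  rcases Nat.eq_or_lt_of_le hss with heq | hlt
  · rw [heq]
  obtain ⟨x, hx⟩ := level_exists hT hmax hex (show s ≤ h by omega)
  obtain ⟨x', hx'⟩ := level_exists hT hmax hex (show s' ≤ h by omega)
  have hdeg : g.degree x' ≤ g.degree x := h1 x x' (by omega)
  rw [← children_card hT hreg hx, ← children_card hT hreg hx']
  have hx'r : x' ≠ r := by
    intro hc; rw [hc, SimpleGraph.dist_self] at hx'; omega
  have e2 := degree_children hT (r := r) x'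
  rw [if_neg hx'r] at e2
  have e1 := degree_children hT (r := r) x
  by_cases hxr : x = r
  · rw [if_pos hxr] at e1
    omega
  · rw [if_neg hxr] at e1
    omega

lemma cf_root_slack {h : ℕ}
    (hreg : ∀ x y : Fin n, g.dist r x = g.dist r y → g.degree x = g.degree y)
    (hmax : ∀ k, g.dist r k ≤ h) (hex : ∃ k, g.dist r k = h)
    (h1 : ∀ i j : Fin n, g.dist r i < g.dist r j → g.degree j ≤ g.degree i)
    {s' : ℕ} (h1s : 1 ≤ s') (hs' : s' < h) : cf g r s' + 1 ≤ cf g r 0 := by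
  obtain ⟨x', hx'⟩ := level_exists hT hmax hex (show s' ≤ h by omega)
  have hdeg : g.degree x' ≤ g.degree r := by
    refine h1 r x' ?_
    rw [SimpleGraph.dist_self]
    omega
  have hx'r : x' ≠ r := by
    intro hc; rw [hc, SimpleGraph.dist_self] at hx'; omega
  have e2 := degree_children hT (r := r) x'
  rw [if_neg hx'r] at e2
  rw [← children_card hT hreg hx', cf_zero_eq hT hreg]
  omega

lemma cf_zero_two {h : ℕ}
    (hreg : ∀ x y : Fin n, g.dist r x = g.dist r y → g.degree x = g.degree y)
    (h4 : ∀ x : Fin n, g.degree x = 1 → g.dist r x = h)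
    (hnr : ∃ v : Fin n, 1 ≤ g.dist r v)
    (hh : 1 ≤ h) : 2 ≤ cf g r 0 := by
  rw [cf_zero_eq hT hreg]
  have hge1 : 1 ≤ (children g r r).card := root_child hT hnr
  have e1 := degree_children hT (r := r) r
  rw [if_pos rfl] at e1
  by_contra hcon
  push_neg at hcon
  have hdeg : g.degree r = 1 := by omega
  have := h4 r hdeg
  rw [SimpleGraph.dist_self] at this
  omega

end CfProps

end Stmt16

/-- In a monotone hierarchy of height `h`, if `ρ(j) = ρ(i) + 1` then the neighborhood
statistic of `i` strictly first-order dominates that of `j`: every ball around `i`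
is at least as large as the corresponding ball around `j`, strictly so at radius
`h − ρ(i)`. -/
theorem stmt_16 {n : ℕ} (g : SimpleGraph (Fin n)) [DecidableRel g.Adj]
    (r : Fin n) (h : ℕ) (hMH : IsMonotoneHierarchy g r h)
    (i j : Fin n) (hdepth : g.dist r j = g.dist r i + 1) :
    (∀ t : ℕ, ballCount g j t ≤ ballCount g i t) ∧
      ballCount g j (h - g.dist r i) < ballCount g i (h - g.dist r i) := by
  obtain ⟨hT, h1, h2, h3, h4⟩ := hMH
  have hreg := Stmt16.level_reg hT h3
  have hnr : ∃ v : Fin n, 1 ≤ g.dist r v := ⟨j, by omega⟩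
  obtain ⟨hmax, hex⟩ := Stmt16.depth_bounds hT h4 hnr
  set ℓ := g.dist r i with hℓ
  have hlh : ℓ + 1 ≤ h := by
    have := hmax j
    omega
  have hmono : ∀ s s', s ≤ s' → s' < h → Stmt16.cf g r s' ≤ Stmt16.cf g r s :=
    fun s s' hss hs' => Stmt16.cf_mono hT hreg hmax hex h1 hss hs'
  have hpos : ∀ s, s < h → 1 ≤ Stmt16.cf g r s :=
    fun s hs => Stmt16.cf_pos hT hreg hmax hex h4 hnr hs
  have hroot : ∀ s', 1 ≤ s' → s' < h → Stmt16.cf g r s' + 1 ≤ Stmt16.cf g r 0 :=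
    fun s' h1s hs' => Stmt16.cf_root_slack hT hreg hmax hex h1 h1s hs'
  have hc0 : 2 ≤ Stmt16.cf g r 0 := Stmt16.cf_zero_two hT hreg h4 hnr (by omega)
  have hbi : ∀ t, ballCount g i t
      = ∑ a ∈ Finset.range (h+1), Stmt16.Cnum (Stmt16.cf g r) t ℓ a := by
    intro t
    rw [Stmt16.ballCount_sum hT hreg hmax i t, ← hℓ]
  have hbj : ∀ t, ballCount g j t
      = ∑ a ∈ Finset.range (h+1), Stmt16.Cnum (Stmt16.cf g r) t (ℓ+1) a := by
    intro t
    rw [Stmt16.ballCount_sum hT hreg hmax j t, hdepth]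
  constructor
  · intro t
    rw [hbi t, hbj t]
    exact Stmt16.num_le h t ℓ hmono hpos hroot hlh
  · rw [hbi (h - ℓ), hbj (h - ℓ)]
    exact Stmt16.num_lt h ℓ hpos hc0 hlh
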